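/- Let A, A' : ℝ² → ℝ^{2×2} be smooth compactly supported fields of symmetric matrices, written A = [[a₁, a₃],[a₃, a₂]] and A' = [[a₁', a₃'],[a₃', a₂']], and define f_A(x,θ) = ⟨θ, A(x)θ⟩ and f_{A'}(x,θ) = ⟨θ, A'(x)θ⟩. Suppose (S f_A)(x,r) = (S f_{A'})(x,r) for all x ∈ ℝ² and r > 0, and suppose in addition that a_j = a_j' identically for some fixed index j ∈ {1,2,3}. Then A(x) = A'(x) for every x ∈ ℝ². -/

import Mathlib

open MeasureTheory Real Matrix

noncomputable section

/-- The point of the unit circle `S¹ ⊂ ℝ²` at angle `t`. -/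
def circ (t : ℝ) : ℝ × ℝ := (Real.cos t, Real.sin t)

/-- The anisotropic spherical Radon transform
`(S f)(x, r) = ∫_{S¹} f(x + rθ, θ) ds(θ)`. -/
def radonS (f : ℝ × ℝ → ℝ × ℝ → ℂ) (x : ℝ × ℝ) (r : ℝ) : ℂ :=
  ∫ t in (0 : ℝ)..(2 * π), f (x + r • circ t) (circ t)

/-- The quadratic-form symbol `f_A(x, θ) = ⟨θ, A(x) θ⟩` associated with a matrix field. -/
def quadF (A : ℝ × ℝ → Matrix (Fin 2) (Fin 2) ℝ) (x : ℝ × ℝ) (v : ℝ × ℝ) : ℂ :=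
  ((![v.1, v.2] ⬝ᵥ (A x).mulVec ![v.1, v.2] : ℝ) : ℂ)

open intervalIntegral Metric



def e1 : ℝ × ℝ := (1, 0)
def e2 : ℝ × ℝ := (0, 1)
def Dd (q : ℝ × ℝ → ℝ) (a : ℝ × ℝ) : ℝ × ℝ → ℝ := fun y => fderiv ℝ q y a
def G (q : ℝ × ℝ → ℝ) (c : ℝ → ℝ) (x : ℝ × ℝ) (r : ℝ) : ℝ :=
  ∫ t in (0:ℝ)..(2*π), c t * q (x + r • circ t)

lemma myint (f F : ℝ → ℝ) (hF : ∀ t, HasDerivAt F (f t) t) (hf : Continuous f) :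
    ∫ t in (0:ℝ)..(2*π), f t = F (2*π) - F 0 :=
  intervalIntegral.integral_eq_sub_of_hasDerivAt (fun t _ => hF t) ((hf.intervalIntegrable _ _))


lemma Icos2 : ∫ t in (0:ℝ)..(2*π), Real.cos t ^ 2 = π := by
  rw [myint _ (fun t => t/2 + Real.sin t * Real.cos t / 2) ?_ (by continuity)]
  · simp [Real.sin_two_pi, Real.cos_two_pi]
  · intro t
    have h := (((hasDerivAt_id t).div_const 2).add
      (((Real.hasDerivAt_sin t).mul (Real.hasDerivAt_cos t)).div_const 2))
    refine h.congr_deriv ?_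
    nlinarith [Real.sin_sq_add_cos_sq t]

lemma Isin2 : ∫ t in (0:ℝ)..(2*π), Real.sin t ^ 2 = π := by
  rw [myint _ (fun t => t/2 - Real.sin t * Real.cos t / 2) ?_ (by continuity)]
  · simp [Real.sin_two_pi, Real.cos_two_pi]
  · intro t
    have h := (((hasDerivAt_id t).div_const 2).sub
      (((Real.hasDerivAt_sin t).mul (Real.hasDerivAt_cos t)).div_const 2))
    refine h.congr_deriv ?_
    nlinarith [Real.sin_sq_add_cos_sq t]

lemma Icossin : ∫ t in (0:ℝ)..(2*π), Real.cos t * Real.sin t = 0 := by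
  rw [myint _ (fun t => Real.sin t ^ 2 / 2) ?_ (by continuity)]
  · simp [Real.sin_two_pi]
  · intro t
    have h := (((Real.hasDerivAt_sin t).pow 2).div_const 2)
    refine h.congr_deriv ?_
    ring

lemma Icos4 : ∫ t in (0:ℝ)..(2*π), Real.cos t ^ 4 = 3 * π / 4 := by
  rw [myint _ (fun t => 3*t/8 + Real.sin t * Real.cos t / 2
      + Real.sin t * Real.cos t * (2 * Real.cos t ^ 2 - 1) / 8) ?_ (by continuity)]
  · simp [Real.sin_two_pi, Real.cos_two_pi]; ring
  · intro t
    have h1 := (Real.hasDerivAt_sin t).mul (Real.hasDerivAt_cos t)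
    have h2 := ((Real.hasDerivAt_cos t).pow 2).const_mul (2:ℝ)
    have h3 := (h2.sub_const 1)
    have h := ((hasDerivAt_const t (3:ℝ)).mul (hasDerivAt_id t)).div_const 8 |>.add
      (h1.div_const 2) |>.add ((h1.mul h3).div_const 8)
    refine h.congr_deriv ?_
    norm_num only [Pi.pow_apply, Pi.mul_apply, id]
    nlinarith [Real.sin_sq_add_cos_sq t]

lemma Isin4 : ∫ t in (0:ℝ)..(2*π), Real.sin t ^ 4 = 3 * π / 4 := by
  rw [myint _ (fun t => 3*t/8 - Real.sin t * Real.cos t / 2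
      + Real.sin t * Real.cos t * (2 * Real.cos t ^ 2 - 1) / 8) ?_ (by continuity)]
  · simp [Real.sin_two_pi, Real.cos_two_pi]; ring
  · intro t
    have h1 := (Real.hasDerivAt_sin t).mul (Real.hasDerivAt_cos t)
    have h2 := ((Real.hasDerivAt_cos t).pow 2).const_mul (2:ℝ)
    have h3 := (h2.sub_const 1)
    have h := (((hasDerivAt_const t (3:ℝ)).mul (hasDerivAt_id t)).div_const 8 |>.sub
      (h1.div_const 2)) |>.add ((h1.mul h3).div_const 8)
    refine h.congr_deriv ?_
    norm_num only [Pi.pow_apply, Pi.mul_apply, id]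
    nlinarith [Real.sin_sq_add_cos_sq t]

lemma Icos2sin2 : ∫ t in (0:ℝ)..(2*π), Real.cos t ^ 2 * Real.sin t ^ 2 = π / 4 := by
  rw [myint _ (fun t => t/8 - Real.sin t * Real.cos t * (2 * Real.cos t ^ 2 - 1) / 8) ?_
      (by continuity)]
  · simp [Real.sin_two_pi, Real.cos_two_pi]; ring
  · intro t
    have h1 := (Real.hasDerivAt_sin t).mul (Real.hasDerivAt_cos t)
    have h3 := (((Real.hasDerivAt_cos t).pow 2).const_mul (2:ℝ)).sub_const 1
    have h := ((hasDerivAt_id t).div_const 8).sub ((h1.mul h3).div_const 8)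
    refine h.congr_deriv ?_
    norm_num only [Pi.pow_apply, Pi.mul_apply, id]
    nlinarith [Real.sin_sq_add_cos_sq t]

lemma Icos3sin : ∫ t in (0:ℝ)..(2*π), Real.cos t ^ 3 * Real.sin t = 0 := by
  rw [myint _ (fun t => -(Real.cos t ^ 4) / 4) ?_ (by continuity)]
  · simp [Real.cos_two_pi]
  · intro t
    have h := (((Real.hasDerivAt_cos t).pow 4).neg).div_const 4
    refine h.congr_deriv ?_
    ring

lemma Icossin3 : ∫ t in (0:ℝ)..(2*π), Real.cos t * Real.sin t ^ 3 = 0 := by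
  rw [myint _ (fun t => Real.sin t ^ 4 / 4) ?_ (by continuity)]
  · simp [Real.sin_two_pi]
  · intro t
    have h := ((Real.hasDerivAt_sin t).pow 4).div_const 4
    refine h.congr_deriv ?_
    ring






lemma continuous_circ : Continuous circ := Real.continuous_cos.prodMk Real.continuous_sin

lemma norm_circ_le (t : ℝ) : ‖circ t‖ ≤ 1 := by
  rw [circ, Prod.norm_def]
  simp only [Real.norm_eq_abs, sup_le_iff]
  exact ⟨Real.abs_cos_le_one t, Real.abs_sin_le_one t⟩

lemma Dd_contDiff {q : ℝ × ℝ → ℝ} (hq : ContDiff ℝ (⊤:ℕ∞) q) (a : ℝ × ℝ) :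
    ContDiff ℝ (⊤:ℕ∞) (Dd q a) :=
  (hq.fderiv_right (by simp)).clm_apply contDiff_const

lemma Dd_supp {q : ℝ × ℝ → ℝ} (hc : HasCompactSupport q) (a : ℝ × ℝ) :
    HasCompactSupport (Dd q a) :=
  hc.fderiv_apply ℝ a

lemma circ_decomp (t : ℝ) : circ t = Real.cos t • e1 + Real.sin t • e2 := by
  simp [circ, e1, e2, Prod.ext_iff]

lemma fderiv_circ_apply {q : ℝ × ℝ → ℝ} (y : ℝ × ℝ) (t : ℝ) :
    fderiv ℝ q y (circ t) = Real.cos t * Dd q e1 y + Real.sin t * Dd q e2 y := by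
  rw [circ_decomp t, map_add, ContinuousLinearMap.map_smul, ContinuousLinearMap.map_smul]
  simp [Dd]

lemma line_hasDerivAt {q : ℝ × ℝ → ℝ} (hq : ContDiff ℝ (⊤:ℕ∞) q) (x θ : ℝ × ℝ) (r : ℝ) :
    HasDerivAt (fun s => q (x + s • θ)) (fderiv ℝ q (x + r • θ) θ) r := by
  have hline : HasDerivAt (fun s : ℝ => x + s • θ) θ r := by
    simpa using ((hasDerivAt_id r).smul_const θ).const_add x
  exact ((hq.differentiable (by simp) _).hasFDerivAt).comp_hasDerivAt r hline

/-- The key derivative-under-the-integral lemma. -/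
lemma G_hasDerivAt {q : ℝ × ℝ → ℝ} (hq : ContDiff ℝ (⊤:ℕ∞) q) (hqc : HasCompactSupport q)
    {c : ℝ → ℝ} (hc : Continuous c) (x : ℝ × ℝ) (r₀ : ℝ) :
    HasDerivAt (fun r => G q c x r)
      (G (Dd q e1) (fun t => c t * Real.cos t) x r₀
        + G (Dd q e2) (fun t => c t * Real.sin t) x r₀) r₀ := by
  obtain ⟨C₁, hC₁⟩ := ((Dd_contDiff hq e1).continuous).bounded_above_of_compact_support
    (Dd_supp hqc e1)
  obtain ⟨C₂, hC₂⟩ := ((Dd_contDiff hq e2).continuous).bounded_above_of_compact_support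
    (Dd_supp hqc e2)
  set F' : ℝ → ℝ → ℝ := fun r t =>
    c t * Real.cos t * Dd q e1 (x + r • circ t) + c t * Real.sin t * Dd q e2 (x + r • circ t)
    with hF'
  have hcont : ∀ r : ℝ, Continuous (fun t => c t * q (x + r • circ t)) := fun r =>
    hc.mul (hq.continuous.comp (continuous_const.add (continuous_circ.const_smul r)))
  have hcont' : ∀ r : ℝ, Continuous (fun t => F' r t) := by
    intro r
    apply Continuous.add <;>
    exact ((hc.mul (by continuity)).mul (((Dd_contDiff hq _).continuous).comp
      (continuous_const.add (continuous_circ.const_smul r))))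
  have key := intervalIntegral.hasDerivAt_integral_of_dominated_loc_of_deriv_le
    (F := fun r t => c t * q (x + r • circ t)) (F' := F')
    (x₀ := r₀) (s := Metric.ball r₀ 1) (a := 0) (b := 2*π) (μ := volume)
    (bound := fun t => |c t| * (|C₁| + |C₂|))
    (Metric.ball_mem_nhds r₀ one_pos)
    (Filter.Eventually.of_forall fun r => (hcont r).aestronglyMeasurable)
    ((hcont r₀).intervalIntegrable 0 (2*π))
    ((hcont' r₀).aestronglyMeasurable)
    ?_ ((by continuity : Continuous fun t => |c t| * (|C₁| + |C₂|)).intervalIntegrable 0 (2*π))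
    ?_
  · have i1 : IntervalIntegrable (fun t => c t * Real.cos t * Dd q e1 (x + r₀ • circ t)) volume 0 (2*π) :=
      (((hc.mul (by continuity)).mul (((Dd_contDiff hq e1).continuous).comp
        (continuous_const.add (continuous_circ.const_smul r₀)))).intervalIntegrable 0 (2*π))
    have i2 : IntervalIntegrable (fun t => c t * Real.sin t * Dd q e2 (x + r₀ • circ t)) volume 0 (2*π) :=
      (((hc.mul (by continuity)).mul (((Dd_contDiff hq e2).continuous).comp
        (continuous_const.add (continuous_circ.const_smul r₀)))).intervalIntegrable 0 (2*π))
    have heq : (∫ t in (0:ℝ)..(2*π), F' r₀ t)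
        = G (Dd q e1) (fun t => c t * Real.cos t) x r₀
          + G (Dd q e2) (fun t => c t * Real.sin t) x r₀ := by
      rw [hF', intervalIntegral.integral_add i1 i2]; rfl
    exact heq ▸ key.2
  · apply Filter.Eventually.of_forall
    intro t _ r _
    rw [hF']
    have b1 : |Dd q e1 (x + r • circ t)| ≤ |C₁| :=
      (hC₁ _).trans (le_abs_self _)
    have b2 : |Dd q e2 (x + r • circ t)| ≤ |C₂| :=
      (hC₂ _).trans (le_abs_self _)
    have hcos := Real.abs_cos_le_one t
    have hsin := Real.abs_sin_le_one t
    have hC₁0 : (0:ℝ) ≤ |C₁| := abs_nonneg _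
    have hC₂0 : (0:ℝ) ≤ |C₂| := abs_nonneg _
    have e1b : |c t * Real.cos t * Dd q e1 (x + r • circ t)| ≤ |c t| * |C₁| := by
      rw [abs_mul, abs_mul]
      nlinarith [mul_le_mul (mul_le_mul_of_nonneg_left hcos (abs_nonneg (c t))) b1
        (abs_nonneg _) (mul_nonneg (abs_nonneg (c t)) zero_le_one)]
    have e2b : |c t * Real.sin t * Dd q e2 (x + r • circ t)| ≤ |c t| * |C₂| := by
      rw [abs_mul, abs_mul]
      nlinarith [mul_le_mul (mul_le_mul_of_nonneg_left hsin (abs_nonneg (c t))) b2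
        (abs_nonneg _) (mul_nonneg (abs_nonneg (c t)) zero_le_one)]
    calc ‖c t * Real.cos t * Dd q e1 (x + r • circ t)
            + c t * Real.sin t * Dd q e2 (x + r • circ t)‖
        ≤ ‖c t * Real.cos t * Dd q e1 (x + r • circ t)‖
            + ‖c t * Real.sin t * Dd q e2 (x + r • circ t)‖ := norm_add_le _ _
      _ ≤ |c t| * |C₁| + |c t| * |C₂| := by
          rw [Real.norm_eq_abs, Real.norm_eq_abs]; exact add_le_add e1b e2b
      _ = |c t| * (|C₁| + |C₂|) := by ring
  · apply Filter.Eventually.of_forall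
    intro t _ r _
    have hder := (line_hasDerivAt hq x (circ t) r).const_mul (c t)
    rw [fderiv_circ_apply] at hder
    refine hder.congr_deriv ?_
    rw [hF']; ring



lemma circ_add_pi (t : ℝ) : circ (t + π) = -circ t := by
  simp [circ, Real.cos_add_pi, Real.sin_add_pi, Prod.ext_iff]

lemma circ_add_two_pi (t : ℝ) : circ (t + 2*π) = circ t := by
  simp [circ, Real.cos_add_two_pi, Real.sin_add_two_pi]

lemma G_even (q : ℝ × ℝ → ℝ) (c : ℝ → ℝ) (hc : ∀ t, c (t + π) = c t) (x : ℝ × ℝ) (r : ℝ) :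
    G q c x (-r) = G q c x r := by
  have hper : Function.Periodic (fun t => c t * q (x + r • circ t)) (2*π) := by
    intro t
    have : c (t + 2*π) = c t := by
      rw [show t + 2*π = t + π + π by ring, hc, hc]
    simp only [circ_add_two_pi, this]
  have step1 : G q c x (-r)
      = ∫ t in (0:ℝ)..(2*π), (fun s => c s * q (x + r • circ s)) (t + π) := by
    apply intervalIntegral.integral_congr
    intro t _
    simp only [G, hc t, circ_add_pi]
    congr 2
    module
  rw [step1, intervalIntegral.integral_comp_add_right (fun s => c s * q (x + r • circ s)) π]
  rw [show (0:ℝ) + π = π by ring, show 2*π + π = π + 2*π by ring]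
  rw [hper.intervalIntegral_add_eq π 0, zero_add]
  rfl

lemma G_zero (q : ℝ × ℝ → ℝ) (c : ℝ → ℝ) (x : ℝ × ℝ) :
    G q c x 0 = (∫ t in (0:ℝ)..(2*π), c t) * q x := by
  simp only [G, zero_smul, add_zero]
  rw [← intervalIntegral.integral_mul_const]

/-- a compactly supported differentiable function with vanishing derivative in direction `a ≠ 0`
vanishes. -/
lemma vanish_of_d (q : ℝ × ℝ → ℝ) (hq : Differentiable ℝ q) (hqc : HasCompactSupport q)
    (a : ℝ × ℝ) (ha : a ≠ 0) (h : ∀ x, fderiv ℝ q x a = 0) (x : ℝ × ℝ) : q x = 0 := by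
  obtain ⟨R, hR⟩ := hqc.isBounded.subset_closedBall 0
  have hφ : ∀ s : ℝ, HasDerivAt (fun s : ℝ => q (x + s • a)) 0 s := by
    intro s
    have hline : HasDerivAt (fun s : ℝ => x + s • a) a s := by
      simpa using ((hasDerivAt_id s).smul_const a).const_add x
    have := ((hq _).hasFDerivAt).comp_hasDerivAt s hline
    rwa [h] at this
  have hconst : ∀ s₁ s₂ : ℝ, q (x + s₁ • a) = q (x + s₂ • a) := by
    intro s₁ s₂
    exact is_const_of_deriv_eq_zero (fun s => (hφ s).differentiableAt)
      (fun s => (hφ s).deriv) s₁ s₂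
  have hnorm : 0 < ‖a‖ := norm_pos_iff.mpr ha
  set S : ℝ := (R + ‖x‖ + 1) / ‖a‖ with hS
  have hout : q (x + S • a) = 0 := by
    apply image_eq_zero_of_notMem_tsupport
    intro hmem
    have h1 : ‖x + S • a‖ ≤ R := by simpa using hR hmem
    have h2 : ‖S • a‖ ≤ ‖x + S • a‖ + ‖x‖ := by
      have := norm_sub_le (x + S • a) x
      simpa using this
    have hR0 : (0:ℝ) ≤ R := le_trans (norm_nonneg _) h1
    have h3 : ‖S • a‖ = R + ‖x‖ + 1 := by
      rw [norm_smul, Real.norm_eq_abs, hS, abs_of_nonneg (by positivity)]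
      rw [div_mul_cancel₀ _ (ne_of_gt hnorm)]
    linarith
  have := hconst 0 S
  simpa [hout] using this





lemma fderiv_Dd {q : ℝ × ℝ → ℝ} (hq : ContDiff ℝ (⊤:ℕ∞) q) (a : ℝ × ℝ) (x : ℝ × ℝ) :
    fderiv ℝ (Dd q a) x = (fderiv ℝ (fderiv ℝ q) x).flip a := by
  have hc : DifferentiableAt ℝ (fderiv ℝ q) x :=
    ((hq.fderiv_right (m := (⊤:ℕ∞)) (by simp)).differentiable (by simp)).differentiableAt
  have := fderiv_clm_apply hc (differentiableAt_const a)
  rw [show Dd q a = fun y => fderiv ℝ q y a from rfl]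
  simpa using this

lemma dd_symm {q : ℝ × ℝ → ℝ} (hq : ContDiff ℝ (⊤:ℕ∞) q) (a b : ℝ × ℝ) (x : ℝ × ℝ) :
    fderiv ℝ (Dd q a) x b = fderiv ℝ (Dd q b) x a := by
  rw [fderiv_Dd hq, fderiv_Dd hq]
  have hd : ∀ y, HasFDerivAt q (fderiv ℝ q y) y :=
    fun y => ((hq.differentiable (by simp)) y).hasFDerivAt
  have hdd : HasFDerivAt (fderiv ℝ q) (fderiv ℝ (fderiv ℝ q) x) x :=
    (((hq.fderiv_right (m := (⊤:ℕ∞)) (by simp)).differentiable (by simp)) x).hasFDerivAt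
  simpa [ContinuousLinearMap.flip_apply] using second_derivative_symmetric hd hdd b a

lemma vanish_of_dd (q : ℝ × ℝ → ℝ) (hq : ContDiff ℝ (⊤:ℕ∞) q) (hqc : HasCompactSupport q)
    (a b : ℝ × ℝ) (ha : a ≠ 0) (hb : b ≠ 0)
    (h : ∀ x, fderiv ℝ (Dd q a) x b = 0) (x : ℝ × ℝ) : q x = 0 := by
  have h1 : ∀ y, Dd q a y = 0 :=
    vanish_of_d (Dd q a) ((Dd_contDiff hq a).differentiable (by simp)) (Dd_supp hqc a) b hb h
  exact vanish_of_d q (hq.differentiable (by simp)) hqc a ha h1 x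

lemma e1_ne : (e1 : ℝ × ℝ) ≠ 0 := by simp [e1, Prod.ext_iff]
lemma e2_ne : (e2 : ℝ × ℝ) ≠ 0 := by simp [e2, Prod.ext_iff]

/-- mixed second derivative vanishing (using symmetry of u's appearing sum) -/
lemma vanish_of_mixed (q : ℝ × ℝ → ℝ) (hq : ContDiff ℝ (⊤:ℕ∞) q) (hqc : HasCompactSupport q)
    (h : ∀ x, fderiv ℝ (Dd q e1) x e2 + fderiv ℝ (Dd q e2) x e1 = 0) (x : ℝ × ℝ) : q x = 0 := by
  apply vanish_of_dd q hq hqc e1 e2 e1_ne e2_ne _ x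
  intro y
  have hs := dd_symm hq e1 e2 y
  have := h y
  linarith

/-- wave equation with compact support -/
lemma vanish_of_wave (q : ℝ × ℝ → ℝ) (hq : ContDiff ℝ (⊤:ℕ∞) q) (hqc : HasCompactSupport q)
    (h : ∀ x, fderiv ℝ (Dd q e1) x e1 - fderiv ℝ (Dd q e2) x e2 = 0) (x : ℝ × ℝ) : q x = 0 := by
  have hne1 : (e1 - e2 : ℝ × ℝ) ≠ 0 := by
    intro hcon
    have := congrArg Prod.snd hcon
    simp [e1, e2] at this
  have hne2 : (e1 + e2 : ℝ × ℝ) ≠ 0 := by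
    intro hcon
    have := congrArg Prod.fst hcon
    simp [e1, e2] at this
  refine vanish_of_dd q hq hqc (e1 - e2) (e1 + e2) hne1 hne2 ?_ x
  · intro y
    have hdiff : Dd q (e1 - e2) = fun z => Dd q e1 z - Dd q e2 z := by
      funext z; simp [Dd, map_sub]
    rw [hdiff, fderiv_fun_sub
      (((Dd_contDiff hq e1).differentiable (by simp)).differentiableAt)
      (((Dd_contDiff hq e2).differentiable (by simp)).differentiableAt)]
    have hs := dd_symm hq e1 e2 y
    have h2 := h y
    simp only [ContinuousLinearMap.sub_apply, map_add]
    linarith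


lemma Dd_apply (q : ℝ × ℝ → ℝ) (a y : ℝ × ℝ) : Dd q a y = fderiv ℝ q y a := rfl

lemma c1_per : ∀ t : ℝ, Real.cos (t+π) ^ 2 = Real.cos t ^ 2 := by
  intro t; rw [Real.cos_add_pi]; ring

lemma c2_per : ∀ t : ℝ, 2*(Real.cos (t+π) * Real.sin (t+π)) = 2*(Real.cos t * Real.sin t) := by
  intro t; rw [Real.cos_add_pi, Real.sin_add_pi]; ring

lemma c3_per : ∀ t : ℝ, Real.sin (t+π) ^ 2 = Real.sin t ^ 2 := by
  intro t; rw [Real.sin_add_pi]; ring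

lemma Ic2' : ∫ t in (0:ℝ)..(2*π), 2*(Real.cos t * Real.sin t) = 0 := by
  rw [intervalIntegral.integral_const_mul, Icossin, mul_zero]

-- the twelve second-order coefficient integrals
lemma J1 : ∫ t in (0:ℝ)..(2*π), Real.cos t ^ 2 * Real.cos t * Real.cos t = 3*π/4 := by
  rw [show (fun t => Real.cos t ^ 2 * Real.cos t * Real.cos t) = fun t => Real.cos t ^ 4 from
    funext fun t => by ring]
  exact Icos4

lemma J2 : ∫ t in (0:ℝ)..(2*π), Real.cos t ^ 2 * Real.cos t * Real.sin t = 0 := by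
  rw [show (fun t => Real.cos t ^ 2 * Real.cos t * Real.sin t)
      = fun t => Real.cos t ^ 3 * Real.sin t from funext fun t => by ring]
  exact Icos3sin

lemma J3 : ∫ t in (0:ℝ)..(2*π), Real.cos t ^ 2 * Real.sin t * Real.cos t = 0 := by
  rw [show (fun t => Real.cos t ^ 2 * Real.sin t * Real.cos t)
      = fun t => Real.cos t ^ 3 * Real.sin t from funext fun t => by ring]
  exact Icos3sin

lemma J4 : ∫ t in (0:ℝ)..(2*π), Real.cos t ^ 2 * Real.sin t * Real.sin t = π/4 := by
  rw [show (fun t => Real.cos t ^ 2 * Real.sin t * Real.sin t)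
      = fun t => Real.cos t ^ 2 * Real.sin t ^ 2 from funext fun t => by ring]
  exact Icos2sin2

lemma J5 : ∫ t in (0:ℝ)..(2*π), 2*(Real.cos t * Real.sin t) * Real.cos t * Real.cos t = 0 := by
  rw [show (fun t => 2*(Real.cos t * Real.sin t) * Real.cos t * Real.cos t)
      = fun t => 2 * (Real.cos t ^ 3 * Real.sin t) from funext fun t => by ring]
  rw [intervalIntegral.integral_const_mul, Icos3sin, mul_zero]

lemma J6 : ∫ t in (0:ℝ)..(2*π), 2*(Real.cos t * Real.sin t) * Real.cos t * Real.sin t = π/2 := by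
  rw [show (fun t => 2*(Real.cos t * Real.sin t) * Real.cos t * Real.sin t)
      = fun t => 2 * (Real.cos t ^ 2 * Real.sin t ^ 2) from funext fun t => by ring]
  rw [intervalIntegral.integral_const_mul, Icos2sin2]
  ring

lemma J7 : ∫ t in (0:ℝ)..(2*π), 2*(Real.cos t * Real.sin t) * Real.sin t * Real.cos t = π/2 := by
  rw [show (fun t => 2*(Real.cos t * Real.sin t) * Real.sin t * Real.cos t)
      = fun t => 2 * (Real.cos t ^ 2 * Real.sin t ^ 2) from funext fun t => by ring]
  rw [intervalIntegral.integral_const_mul, Icos2sin2]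
  ring

lemma J8 : ∫ t in (0:ℝ)..(2*π), 2*(Real.cos t * Real.sin t) * Real.sin t * Real.sin t = 0 := by
  rw [show (fun t => 2*(Real.cos t * Real.sin t) * Real.sin t * Real.sin t)
      = fun t => 2 * (Real.cos t * Real.sin t ^ 3) from funext fun t => by ring]
  rw [intervalIntegral.integral_const_mul, Icossin3, mul_zero]

lemma J9 : ∫ t in (0:ℝ)..(2*π), Real.sin t ^ 2 * Real.cos t * Real.cos t = π/4 := by
  rw [show (fun t => Real.sin t ^ 2 * Real.cos t * Real.cos t)
      = fun t => Real.cos t ^ 2 * Real.sin t ^ 2 from funext fun t => by ring]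
  exact Icos2sin2

lemma J10 : ∫ t in (0:ℝ)..(2*π), Real.sin t ^ 2 * Real.cos t * Real.sin t = 0 := by
  rw [show (fun t => Real.sin t ^ 2 * Real.cos t * Real.sin t)
      = fun t => Real.cos t * Real.sin t ^ 3 from funext fun t => by ring]
  exact Icossin3

lemma J11 : ∫ t in (0:ℝ)..(2*π), Real.sin t ^ 2 * Real.sin t * Real.cos t = 0 := by
  rw [show (fun t => Real.sin t ^ 2 * Real.sin t * Real.cos t)
      = fun t => Real.cos t * Real.sin t ^ 3 from funext fun t => by ring]
  exact Icossin3

lemma J12 : ∫ t in (0:ℝ)..(2*π), Real.sin t ^ 2 * Real.sin t * Real.sin t = 3*π/4 := by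
  rw [show (fun t => Real.sin t ^ 2 * Real.sin t * Real.sin t)
      = fun t => Real.sin t ^ 4 from funext fun t => by ring]
  exact Isin4

theorem aux (u w v : ℝ × ℝ → ℝ)
    (hu : ContDiff ℝ (⊤:ℕ∞) u) (hw : ContDiff ℝ (⊤:ℕ∞) w) (hv : ContDiff ℝ (⊤:ℕ∞) v)
    (huc : HasCompactSupport u) (hwc : HasCompactSupport w) (hvc : HasCompactSupport v)
    (H : ∀ x r, 0 < r →
      G u (fun t => Real.cos t ^ 2) x r + G w (fun t => 2*(Real.cos t * Real.sin t)) x r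
        + G v (fun t => Real.sin t ^ 2) x r = 0) :
    (∀ x, u x + v x = 0) ∧
    (∀ x, 3 * fderiv ℝ (Dd u e1) x e1 + fderiv ℝ (Dd u e2) x e2
        + 2 * (fderiv ℝ (Dd w e1) x e2 + fderiv ℝ (Dd w e2) x e1)
        + fderiv ℝ (Dd v e1) x e1 + 3 * fderiv ℝ (Dd v e2) x e2 = 0) := by
  have hπ : (0:ℝ) < π := Real.pi_pos
  have hcont1 : Continuous fun t : ℝ => Real.cos t ^ 2 := by fun_prop
  have hcont2 : Continuous fun t : ℝ => 2*(Real.cos t * Real.sin t) := by fun_prop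
  have hcont3 : Continuous fun t : ℝ => Real.sin t ^ 2 := by fun_prop
  have KEY : ∀ x : ℝ × ℝ, (u x + v x = 0) ∧
      (3 * fderiv ℝ (Dd u e1) x e1 + fderiv ℝ (Dd u e2) x e2
        + 2 * (fderiv ℝ (Dd w e1) x e2 + fderiv ℝ (Dd w e2) x e1)
        + fderiv ℝ (Dd v e1) x e1 + 3 * fderiv ℝ (Dd v e2) x e2 = 0) := by
    intro x
    set S : ℝ → ℝ := fun r =>
      G u (fun t => Real.cos t ^ 2) x r + G w (fun t => 2*(Real.cos t * Real.sin t)) x r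
        + G v (fun t => Real.sin t ^ 2) x r with hSdef
    set S1 : ℝ → ℝ := fun r =>
      (G (Dd u e1) (fun t => Real.cos t ^ 2 * Real.cos t) x r
        + G (Dd u e2) (fun t => Real.cos t ^ 2 * Real.sin t) x r)
      + (G (Dd w e1) (fun t => 2*(Real.cos t * Real.sin t) * Real.cos t) x r
        + G (Dd w e2) (fun t => 2*(Real.cos t * Real.sin t) * Real.sin t) x r)
      + (G (Dd v e1) (fun t => Real.sin t ^ 2 * Real.cos t) x r
        + G (Dd v e2) (fun t => Real.sin t ^ 2 * Real.sin t) x r) with hS1def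
    have hd0 : ∀ r, HasDerivAt S (S1 r) r := fun r =>
      ((G_hasDerivAt hu huc hcont1 x r).add (G_hasDerivAt hw hwc hcont2 x r)).add
        (G_hasDerivAt hv hvc hcont3 x r)
    have hSeven : ∀ r, S (-r) = S r := by
      intro r
      simp only [hSdef]
      rw [G_even u _ c1_per, G_even w _ c2_per, G_even v _ c3_per]
    have hSne : ∀ r : ℝ, r ≠ 0 → S r = 0 := by
      intro r hr
      rcases lt_or_gt_of_ne hr with hneg | hpos
      · have h1 := hSeven (-r)
        rw [neg_neg] at h1
        rw [h1]
        exact H x (-r) (by linarith)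
      · exact H x r hpos
    have hS00 : S 0 = 0 := by
      have hc0 := (hd0 0).continuousAt
      have ht1 : Filter.Tendsto S (nhdsWithin (0:ℝ) {(0:ℝ)}ᶜ) (nhds (S 0)) :=
        hc0.continuousWithinAt
      have ht2 : Filter.Tendsto S (nhdsWithin (0:ℝ) {(0:ℝ)}ᶜ) (nhds 0) := by
        refine Filter.Tendsto.congr' ?_ tendsto_const_nhds
        filter_upwards [self_mem_nhdsWithin] with r hr
        exact (hSne r hr).symm
      exact tendsto_nhds_unique ht1 ht2
    have hS0 : ∀ r, S r = 0 := by
      intro r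
      rcases eq_or_ne r 0 with rfl | hr
      · exact hS00
      · exact hSne r hr
    have hSfun : S = fun _ => (0:ℝ) := funext hS0
    have hS1 : ∀ r, S1 r = 0 := by
      intro r
      have hz : HasDerivAt (fun _ : ℝ => (0:ℝ)) (S1 r) r := hSfun ▸ hd0 r
      exact hz.unique (hasDerivAt_const r 0)
    have hS1fun : S1 = fun _ => (0:ℝ) := funext hS1
    -- second derivative at 0
    have hu1 := G_hasDerivAt (Dd_contDiff hu e1) (Dd_supp huc e1)
      (c := fun t => Real.cos t ^ 2 * Real.cos t) (hc := (hcont1.mul Real.continuous_cos)) x 0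
    have hu2 := G_hasDerivAt (Dd_contDiff hu e2) (Dd_supp huc e2)
      (c := fun t => Real.cos t ^ 2 * Real.sin t) (hc := (hcont1.mul Real.continuous_sin)) x 0
    have hw1 := G_hasDerivAt (Dd_contDiff hw e1) (Dd_supp hwc e1)
      (c := fun t => 2*(Real.cos t * Real.sin t) * Real.cos t) (hc := (hcont2.mul Real.continuous_cos)) x 0
    have hw2 := G_hasDerivAt (Dd_contDiff hw e2) (Dd_supp hwc e2)
      (c := fun t => 2*(Real.cos t * Real.sin t) * Real.sin t) (hc := (hcont2.mul Real.continuous_sin)) x 0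
    have hv1 := G_hasDerivAt (Dd_contDiff hv e1) (Dd_supp hvc e1)
      (c := fun t => Real.sin t ^ 2 * Real.cos t) (hc := (hcont3.mul Real.continuous_cos)) x 0
    have hv2 := G_hasDerivAt (Dd_contDiff hv e2) (Dd_supp hvc e2)
      (c := fun t => Real.sin t ^ 2 * Real.sin t) (hc := (hcont3.mul Real.continuous_sin)) x 0
    have hd1 : HasDerivAt S1 _ 0 := ((hu1.add hu2).add (hw1.add hw2)).add (hv1.add hv2)
    have hz1 : HasDerivAt (fun _ : ℝ => (0:ℝ)) _ 0 := hS1fun ▸ hd1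
    have hD2 := hz1.unique (hasDerivAt_const 0 0)
    -- now compute
    constructor
    · have h0 := hS0 0
      simp only [hSdef, G_zero, Icos2, Isin2, Ic2'] at h0
      have h2 : π * (u x + v x) = 0 := by linarith
      exact (mul_eq_zero.mp h2).resolve_left (ne_of_gt hπ)
    · simp only [G_zero, J1, J2, J3, J4, J5, J6, J7, J8, J9, J10, J11, J12] at hD2
      simp only [Dd_apply] at hD2
      have h2 : π/4 * (3 * fderiv ℝ (Dd u e1) x e1
          + fderiv ℝ (Dd u e2) x e2
          + 2 * (fderiv ℝ (Dd w e1) x e2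
            + fderiv ℝ (Dd w e2) x e1)
          + fderiv ℝ (Dd v e1) x e1
          + 3 * fderiv ℝ (Dd v e2) x e2) = 0 := by linarith
      have h3 := (mul_eq_zero.mp h2).resolve_left (by positivity)
      linarith
  exact ⟨fun x => (KEY x).1, fun x => (KEY x).2⟩


lemma dd_of_zero (a b x : ℝ × ℝ) : fderiv ℝ (Dd (fun _ => (0:ℝ)) a) x b = 0 := by
  have h1 : Dd (fun _ : ℝ × ℝ => (0:ℝ)) a = fun _ => 0 := by
    funext y; simp [Dd]
  rw [h1]
  simp

lemma dd_of_neg {q : ℝ × ℝ → ℝ} (hq : ContDiff ℝ (⊤:ℕ∞) q) (a b x : ℝ × ℝ) :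
    fderiv ℝ (Dd (fun y => -q y) a) x b = - fderiv ℝ (Dd q a) x b := by
  have h1 : Dd (fun y => -q y) a = fun y => -(Dd q a y) := by
    funext y; simp only [Dd, fderiv_neg]; simp
  rw [h1, fderiv_fun_neg]
  simp

/-- **Recovery of a symmetric matrix field from the anisotropic spherical Radon transform
of its quadratic form when one entry is known.** If `A = [[a₁,a₃],[a₃,a₂]]` and
`A' = [[a₁',a₃'],[a₃',a₂']]` are smooth compactly supported symmetric matrix fields whose
quadratic forms have equal anisotropic spherical Radon transforms, and if for some fixed
`j ∈ {1,2,3}` the entries `a_j` and `a_j'` coincide identically, then `A = A'` everywhere. -/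
theorem radon_determines_matrix_given_one_entry
    (A A' : ℝ × ℝ → Matrix (Fin 2) (Fin 2) ℝ)
    (hA : ∀ i j, ContDiff ℝ (⊤ : ℕ∞) (fun x => A x i j))
    (hA' : ∀ i j, ContDiff ℝ (⊤ : ℕ∞) (fun x => A' x i j))
    (hAc : ∀ i j, HasCompactSupport (fun x => A x i j))
    (hA'c : ∀ i j, HasCompactSupport (fun x => A' x i j))
    (hAs : ∀ x, (A x).IsSymm) (hA's : ∀ x, (A' x).IsSymm)
    (h : ∀ x : ℝ × ℝ, ∀ r : ℝ, 0 < r → radonS (quadF A) x r = radonS (quadF A') x r)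
    (hentry : (∀ x, A x 0 0 = A' x 0 0) ∨ (∀ x, A x 1 1 = A' x 1 1) ∨
      (∀ x, A x 0 1 = A' x 0 1)) :
    ∀ x : ℝ × ℝ, A x = A' x := by
  set u : ℝ × ℝ → ℝ := fun y => A y 0 0 - A' y 0 0 with hudef
  set w : ℝ × ℝ → ℝ := fun y => A y 0 1 - A' y 0 1 with hwdef
  set v : ℝ × ℝ → ℝ := fun y => A y 1 1 - A' y 1 1 with hvdef
  have hu : ContDiff ℝ (⊤:ℕ∞) u := (hA 0 0).sub (hA' 0 0)
  have hw : ContDiff ℝ (⊤:ℕ∞) w := (hA 0 1).sub (hA' 0 1)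
  have hv : ContDiff ℝ (⊤:ℕ∞) v := (hA 1 1).sub (hA' 1 1)
  have huc : HasCompactSupport u := (hAc 0 0).comp₂_left (hA'c 0 0) (sub_zero 0)
  have hwc : HasCompactSupport w := (hAc 0 1).comp₂_left (hA'c 0 1) (sub_zero 0)
  have hvc : HasCompactSupport v := (hAc 1 1).comp₂_left (hA'c 1 1) (sub_zero 0)
  -- the pointwise integrand identity
  have hquad : ∀ (y : ℝ × ℝ) (t : ℝ), quadF A y (circ t) - quadF A' y (circ t)
      = ((Real.cos t ^ 2 * u y + 2*(Real.cos t * Real.sin t) * w y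
          + Real.sin t ^ 2 * v y : ℝ) : ℂ) := by
    intro y t
    have hsA : A y 1 0 = A y 0 1 := (hAs y).apply 0 1
    have hsA' : A' y 1 0 = A' y 0 1 := (hA's y).apply 0 1
    simp only [quadF, ← Complex.ofReal_sub]
    congr 1
    simp only [dotProduct, Matrix.mulVec, Fin.sum_univ_two,
      Matrix.cons_val_zero, Matrix.cons_val_one, Matrix.head_cons, circ]
    rw [hsA, hsA', hudef, hwdef, hvdef]
    ring
  -- reduce the hypothesis to the G form
  have H : ∀ x r, 0 < r →
      G u (fun t => Real.cos t ^ 2) x r + G w (fun t => 2*(Real.cos t * Real.sin t)) x r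
        + G v (fun t => Real.sin t ^ 2) x r = 0 := by
    intro x r hr
    have hy : Continuous fun t : ℝ => x + r • circ t :=
      continuous_const.add (continuous_circ.const_smul r)
    have contQ : ∀ (B : ℝ × ℝ → Matrix (Fin 2) (Fin 2) ℝ),
        (∀ i j, ContDiff ℝ (⊤:ℕ∞) fun z => B z i j) →
        Continuous fun t => quadF B (x + r • circ t) (circ t) := by
      intro B hB
      have h00 : Continuous fun t : ℝ => B (x + r • circ t) 0 0 := ((hB 0 0).continuous).comp hy
      have h01 : Continuous fun t : ℝ => B (x + r • circ t) 0 1 := ((hB 0 1).continuous).comp hy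
      have h10 : Continuous fun t : ℝ => B (x + r • circ t) 1 0 := ((hB 1 0).continuous).comp hy
      have h11 : Continuous fun t : ℝ => B (x + r • circ t) 1 1 := ((hB 1 1).continuous).comp hy
      have hreal : Continuous fun t : ℝ =>
          ![(circ t).1, (circ t).2] ⬝ᵥ (B (x + r • circ t)).mulVec ![(circ t).1, (circ t).2] := by
        simp only [dotProduct, Matrix.mulVec, Fin.sum_univ_two,
          Matrix.cons_val_zero, Matrix.cons_val_one, Matrix.head_cons]
        have hc1 : Continuous fun t : ℝ => (circ t).1 := continuous_circ.fst
        have hc2 : Continuous fun t : ℝ => (circ t).2 := continuous_circ.snd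
        exact (hc1.mul ((h00.mul hc1).add (h01.mul hc2))).add
          (hc2.mul ((h10.mul hc1).add (h11.mul hc2)))
      exact Complex.continuous_ofReal.comp hreal
    have intA : IntervalIntegrable (fun t => quadF A (x + r • circ t) (circ t))
        volume 0 (2*π) := (contQ A hA).intervalIntegrable 0 (2*π)
    have intA' : IntervalIntegrable (fun t => quadF A' (x + r • circ t) (circ t))
        volume 0 (2*π) := (contQ A' hA').intervalIntegrable 0 (2*π)
    have key : (∫ t in (0:ℝ)..(2*π), ((Real.cos t ^ 2 * u (x + r • circ t)
        + 2*(Real.cos t * Real.sin t) * w (x + r • circ t)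
        + Real.sin t ^ 2 * v (x + r • circ t) : ℝ) : ℂ)) = 0 := by
      have step : (∫ t in (0:ℝ)..(2*π), ((Real.cos t ^ 2 * u (x + r • circ t)
          + 2*(Real.cos t * Real.sin t) * w (x + r • circ t)
          + Real.sin t ^ 2 * v (x + r • circ t) : ℝ) : ℂ))
          = ∫ t in (0:ℝ)..(2*π), (quadF A (x + r • circ t) (circ t)
            - quadF A' (x + r • circ t) (circ t)) := by
        apply intervalIntegral.integral_congr
        intro t _
        exact (hquad (x + r • circ t) t).symm
      rw [step, intervalIntegral.integral_sub intA intA']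
      have := h x r hr
      simp only [radonS] at this
      rw [this, sub_self]
    rw [intervalIntegral.integral_ofReal] at key
    have keyr : (∫ t in (0:ℝ)..(2*π), (Real.cos t ^ 2 * u (x + r • circ t)
        + 2*(Real.cos t * Real.sin t) * w (x + r • circ t)
        + Real.sin t ^ 2 * v (x + r • circ t))) = 0 := by exact_mod_cast key
    have i1 : IntervalIntegrable (fun t => Real.cos t ^ 2 * u (x + r • circ t))
        volume 0 (2*π) :=
      (((by fun_prop : Continuous fun t : ℝ => Real.cos t ^ 2)).mul
        (hu.continuous.comp hy)).intervalIntegrable 0 (2*π)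
    have i2 : IntervalIntegrable (fun t => 2*(Real.cos t * Real.sin t) * w (x + r • circ t))
        volume 0 (2*π) :=
      (((by fun_prop : Continuous fun t : ℝ => 2*(Real.cos t * Real.sin t))).mul
        (hw.continuous.comp hy)).intervalIntegrable 0 (2*π)
    have i3 : IntervalIntegrable (fun t => Real.sin t ^ 2 * v (x + r • circ t))
        volume 0 (2*π) :=
      (((by fun_prop : Continuous fun t : ℝ => Real.sin t ^ 2)).mul
        (hv.continuous.comp hy)).intervalIntegrable 0 (2*π)
    rw [intervalIntegral.integral_add (i1.add i2) i3, intervalIntegral.integral_add i1 i2] at keyr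
    exact keyr
  obtain ⟨E0, E2⟩ := aux u w v hu hw hv huc hwc hvc H
  -- given u ≡ 0 and v ≡ 0 we get w ≡ 0
  have step_w : (∀ y, u y = 0) → (∀ y, v y = 0) → ∀ y, w y = 0 := by
    intro hu0 hv0
    have hufun : u = fun _ => 0 := funext hu0
    have hvfun : v = fun _ => 0 := funext hv0
    intro y
    apply vanish_of_mixed w hw hwc _ y
    intro z
    have hE := E2 z
    rw [hufun, hvfun] at hE
    simp only [dd_of_zero] at hE
    linarith
  -- given w ≡ 0 we get u ≡ 0 and v ≡ 0
  have step_u : (∀ y, w y = 0) → ∀ y, u y = 0 := by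
    intro hw0
    have hwfun : w = fun _ => 0 := funext hw0
    intro y
    apply vanish_of_wave u hu huc _ y
    intro z
    have hE := E2 z
    rw [hwfun] at hE
    simp only [dd_of_zero] at hE
    have hvfun : v = fun y => -u y := by
      funext y'
      have := E0 y'
      linarith
    rw [hvfun] at hE
    rw [dd_of_neg hu, dd_of_neg hu] at hE
    linarith
  -- final synthesis
  have final : (∀ y, u y = 0) → (∀ y, w y = 0) → (∀ y, v y = 0) → ∀ x, A x = A' x := by
    intro hu0 hw0 hv0 x
    have e00 : A x 0 0 = A' x 0 0 := by have := hu0 x; simp [hudef] at this; linarith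
    have e01 : A x 0 1 = A' x 0 1 := by have := hw0 x; simp [hwdef] at this; linarith
    have e11 : A x 1 1 = A' x 1 1 := by have := hv0 x; simp [hvdef] at this; linarith
    have e10 : A x 1 0 = A' x 1 0 := by
      rw [(hAs x).apply 0 1, (hA's x).apply 0 1]; exact e01
    ext i j
    fin_cases i <;> fin_cases j <;> assumption
  rcases hentry with hc | hc | hc
  · have hu0 : ∀ y, u y = 0 := fun y => by simp [hudef, hc y]
    have hv0 : ∀ y, v y = 0 := fun y => by have := E0 y; have := hu0 y; linarith
    exact final hu0 (step_w hu0 hv0) hv0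
  · have hv0 : ∀ y, v y = 0 := fun y => by simp [hvdef, hc y]
    have hu0 : ∀ y, u y = 0 := fun y => by have := E0 y; have := hv0 y; linarith
    exact final hu0 (step_w hu0 hv0) hv0
  · have hw0 : ∀ y, w y = 0 := fun y => by simp [hwdef, hc y]
    have hu0 : ∀ y, u y = 0 := step_u hw0
    have hv0 : ∀ y, v y = 0 := fun y => by have := E0 y; have := hu0 y; linarith
    exact final hu0 hw0 hv0

end
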